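/- Let π be a permutation of ℤ with π(i) ≤ i for all i and with k := sup{i - π(i) : i ≤ 0} < ∞. If (x_i) and (x'_i) are two sequences of positive reals both satisfying x_{i+1} = x_i + x_{π(i)} for all i ∈ ℤ, then there exists c > 0 with x'_i = c·x_i for all i ∈ ℤ. -/

import Mathlib

private lemma sol_mono (p : ℤ → ℤ) (x : ℤ → ℝ) (hx : ∀ i, 0 ≤ x i)
    (hr : ∀ i : ℤ, x (i + 1) = x i + x (p i)) : Monotone x :=
  monotone_int_of_le_succ (fun n => by rw [hr n]; linarith [hx (p n)])

private lemma sol_pow (p : ℤ → ℤ) (hp : ∀ i, p i ≤ i) (x : ℤ → ℝ) (hx : ∀ i, 0 < x i)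
    (hr : ∀ i : ℤ, x (i + 1) = x i + x (p i)) :
    ∀ (t : ℕ) (j : ℤ), x (j + t) ≤ 2 ^ t * x j := by
  intro t
  induction t with
  | zero => intro j; simp
  | succ t ih =>
    intro j
    rw [show (j + ((t + 1 : ℕ) : ℤ)) = (j + (t : ℤ)) + 1 by push_cast; ring, hr (j + t)]
    have h2 : x (p (j + (t:ℤ))) ≤ x (j + (t:ℤ)) :=
      sol_mono p x (fun i => (hx i).le) hr (hp _)
    have h3 := ih j
    have h5 : (2:ℝ) ^ (t+1) = 2 * 2 ^ t := by ring
    nlinarith [hx j]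

/-- Main lemma: any two positive solutions are comparable from below. -/
private lemma ML (p : ℤ → ℤ) (hp : ∀ i, p i ≤ i) (k : ℤ)
    (hk : ∀ i : ℤ, i ≤ 0 → i - p i ≤ k)
    (x w : ℤ → ℝ) (hx : ∀ i, 0 < x i) (hw : ∀ i, 0 < w i)
    (hrx : ∀ i : ℤ, x (i + 1) = x i + x (p i))
    (hrw : ∀ i : ℤ, w (i + 1) = w i + w (p i)) :
    ∃ ε : ℝ, 0 < ε ∧ ∀ i, ε * x i ≤ w i := by
  by_contra hcon
  push_neg at hcon
  have hk0 : 0 ≤ k := by have h1 := hp 0; have h2 := hk 0 le_rfl; omega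
  set K : ℝ := 2 ^ k.toNat with hKdef
  have hK1 : (1:ℝ) ≤ K := one_le_pow₀ (by norm_num)
  have hKpos : (0:ℝ) < K := lt_of_lt_of_le one_pos hK1
  set ε : ℝ := w 0 / x 0 with hεdef
  have hε : 0 < ε := div_pos (hw 0) (hx 0)
  have hεK : 0 < ε / K := div_pos hε hKpos
  -- Step A : arbitrarily far to the left there are small-ratio points
  have stepA : ∀ n : ℤ, ∃ j ≤ n, w j < ε / K * x j := by
    intro n
    obtain ⟨i0, hi0'⟩ := hcon (ε / K) hεK
    have claim : ∀ t : ℕ, ∃ j : ℤ, j ≤ i0 - t ∧ w j < ε / K * x j := by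
      intro t
      induction t with
      | zero => exact ⟨i0, by simp, hi0'⟩
      | succ t ih =>
        obtain ⟨j, hj, hwj⟩ := ih
        rcases lt_or_ge j (i0 - t) with h1 | h1
        · exact ⟨j, by push_cast; push_cast at hj; omega, hwj⟩
        · have e0 : j - 1 + 1 = j := by ring
          have e1 : w j = w (j - 1) + w (p (j - 1)) := by
            have := hrw (j - 1); rwa [e0] at this
          have e2 : x j = x (j - 1) + x (p (j - 1)) := by
            have := hrx (j - 1); rwa [e0] at this
          rcases lt_or_ge (w (j - 1)) (ε / K * x (j - 1)) with h2 | h2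
          · exact ⟨j - 1, by push_cast; push_cast at hj; omega, h2⟩
          · refine ⟨p (j - 1), ?_, ?_⟩
            · have := hp (j - 1); push_cast; push_cast at hj; omega
            · rw [e1, e2] at hwj; linarith
    obtain ⟨j, hj, hwj⟩ := claim (i0 - n).toNat
    exact ⟨j, by omega, hwj⟩
  obtain ⟨m, hm0, hwm⟩ := stepA 0
  have monoW := sol_mono p w (fun i => (hw i).le) hrw
  have powX := sol_pow p hp x hx hrx
  -- Step B : at a small-ratio point m ≤ 0, the whole window [m-k, m] has ratio < ε
  have hPm : ∀ j : ℤ, m - k ≤ j → j ≤ m → w j < ε * x j := by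
    intro j h1 h2
    have hxm : x m ≤ K * x j := by
      have hm_eq : m = j + ((m - j).toNat : ℤ) := by omega
      have h3 := powX (m - j).toNat j
      rw [← hm_eq] at h3
      have h4 : (2:ℝ) ^ (m - j).toNat ≤ K := by
        rw [hKdef]
        exact pow_le_pow_right₀ (by norm_num) (by omega)
      nlinarith [(hx j).le]
    have hwj : w j ≤ w m := monoW h2
    have h5 : ε / K * x m ≤ ε / K * (K * x j) :=
      mul_le_mul_of_nonneg_left hxm hεK.le
    have h6 : ε / K * (K * x j) = ε * x j := by field_simp
    linarith
  -- Step C : windows of small ratios propagate to the right, up to 0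
  have hstep : ∀ n : ℤ, n ≤ 0 → (∀ j : ℤ, n - k ≤ j → j ≤ n → w j < ε * x j) →
      (∀ j : ℤ, n + 1 - k ≤ j → j ≤ n + 1 → w j < ε * x j) := by
    intro n hn hQ j h1 h2
    rcases lt_or_ge j (n + 1) with h3 | h3
    · exact hQ j (by omega) (by omega)
    · have hj : j = n + 1 := le_antisymm h2 h3
      have hwn : w n < ε * x n := hQ n (by omega) le_rfl
      have hwp : w (p n) < ε * x (p n) := by
        refine hQ (p n) ?_ (hp n)
        have := hk n hn; omega
      rw [hj, hrw n, hrx n]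
      nlinarith
  have iter : ∀ t : ℕ, m + (t : ℤ) ≤ 1 →
      ∀ j : ℤ, m + (t : ℤ) - k ≤ j → j ≤ m + (t : ℤ) → w j < ε * x j := by
    intro t
    induction t with
    | zero => intro _ j h1 h2; exact hPm j (by omega) (by omega)
    | succ t ih =>
      intro ht j h1 h2
      have hn : m + (t : ℤ) ≤ 0 := by push_cast at ht; omega
      have base := ih (by omega)
      have := hstep (m + (t : ℤ)) hn base j (by push_cast at h1 ⊢; omega)
        (by push_cast at h2 ⊢; omega)
      exact this
  have hQ0 : w 0 < ε * x 0 := by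
    have h := iter (-m).toNat (by omega) 0 (by omega) (by omega)
    exact h
  have : ε * x 0 = w 0 := by
    rw [hεdef]; exact div_mul_cancel₀ _ (hx 0).ne'
  linarith

/-- If `π` is a permutation of `ℤ` with `π(i) ≤ i` and bounded displacements
`i - π(i) ≤ k` for `i ≤ 0`, then any two positive solutions of
`x_{i+1} = x_i + x_{π(i)}` agree up to a positive scalar multiple. -/
theorem stmt16 (π : Equiv.Perm ℤ) (hπ : ∀ i : ℤ, π i ≤ i)
    (k : ℤ) (hk : ∀ i : ℤ, i ≤ 0 → i - π i ≤ k)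
    (x x' : ℤ → ℝ) (hx : ∀ i : ℤ, 0 < x i) (hx' : ∀ i : ℤ, 0 < x' i)
    (hrec : ∀ i : ℤ, x (i + 1) = x i + x (π i))
    (hrec' : ∀ i : ℤ, x' (i + 1) = x' i + x' (π i)) :
    ∃ c : ℝ, 0 < c ∧ ∀ i : ℤ, x' i = c * x i := by
  set p : ℤ → ℤ := fun i => π i with hpdef
  have hbdd : BddBelow (Set.range fun i => x' i / x i) := by
    refine ⟨0, ?_⟩
    rintro _ ⟨i, rfl⟩
    exact (div_pos (hx' i) (hx i)).le
  set c : ℝ := ⨅ i : ℤ, x' i / x i with hcdef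
  have hcle : ∀ i : ℤ, c ≤ x' i / x i := fun i => ciInf_le hbdd i
  obtain ⟨ε0, hε0, hml⟩ := ML p hπ k hk x x' hx hx' hrec hrec'
  have hc : ε0 ≤ c := by
    refine le_ciInf fun i => ?_
    rw [le_div_iff₀ (hx i)]
    exact hml i
  have hcpos : 0 < c := lt_of_lt_of_le hε0 hc
  set y : ℤ → ℝ := fun i => x' i - c * x i with hydef
  have hy0 : ∀ i, 0 ≤ y i := by
    intro i
    have := hcle i
    rw [le_div_iff₀ (hx i)] at this
    simp only [hydef]
    linarith
  have hyrec : ∀ i : ℤ, y (i + 1) = y i + y (p i) := by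
    intro i
    simp only [hydef]
    rw [hrec, hrec']
    ring
  have monoY : Monotone y := sol_mono p y hy0 hyrec
  by_cases hz : ∀ i, y i = 0
  · refine ⟨c, hcpos, fun i => ?_⟩
    have := hz i
    simp only [hydef] at this
    linarith
  · exfalso
    have hypos : ∀ i, 0 < y i := by
      by_contra hcon
      push_neg at hcon
      obtain ⟨b, hb⟩ := hcon
      have hb0 : y b = 0 := le_antisymm hb (hy0 b)
      have up : ∀ i : ℤ, y i = 0 → y (i + 1) = 0 := by
        intro i h
        have h1 : y (p i) ≤ y i := monoY (hπ i)
        have h2 := hy0 (p i)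
        rw [hyrec i, h]
        have : y (p i) = 0 := le_antisymm (h ▸ h1) h2
        rw [this]; ring
      have upt : ∀ t : ℕ, y (b + t) = 0 := by
        intro t
        induction t with
        | zero => simpa using hb0
        | succ t ih =>
          have := up (b + t) ih
          rwa [show b + ((t + 1 : ℕ) : ℤ) = b + (t : ℤ) + 1 by push_cast; ring]
      refine hz fun i => ?_
      rcases le_or_gt i b with h | h
      · exact le_antisymm (hb0 ▸ monoY h) (hy0 i)
      · have : i = b + ((i - b).toNat : ℤ) := by omega
        rw [this]
        exact upt _
    obtain ⟨ε1, hε1, hml1⟩ := ML p hπ k hk x y hx hypos hrec hyrec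
    have : c + ε1 ≤ c := by
      rw [hcdef]
      refine le_ciInf fun i => ?_
      rw [le_div_iff₀ (hx i)]
      have := hml1 i
      simp only [hydef] at this
      linarith
    linarith
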